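/- Let q be a real number with 0 < q < 1 and let N ≥ 2 be an integer. Then the polynomials P₁(t) = (1 − q⁴ ([N]_{q⁴}/[N]_{q²}) t) ∏_{l=3}^{N} (1 − q^{2l} t) and P₂(t) = (1 − q^{−2N+4} ([N]_{q⁴}/[N]_{q²}) t) ∏_{l=0}^{N−3} (1 − q^{−2l} t) have no common root; that is, P₁ and P₂ are coprime in ℝ[t]. -/

import Mathlib

/-- The q-integer `[n]_s = 1 + s + ⋯ + s^(n-1)`. -/
def qint (s : ℝ) (n : ℕ) : ℝ := ∑ i ∈ Finset.range n, s ^ i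

/-- The coefficient polynomial appearing in `y* dy`. -/
noncomputable def P₁ (q : ℝ) (N : ℕ) : Polynomial ℝ :=
  (1 - Polynomial.C (q ^ 4 * qint (q ^ 4) N / qint (q ^ 2) N) * Polynomial.X) *
    ∏ l ∈ Finset.range (N - 2), (1 - Polynomial.C (q ^ (2 * (l + 3))) * Polynomial.X)

/-- The coefficient polynomial appearing in `dy y*`. -/
noncomputable def P₂ (q : ℝ) (N : ℕ) : Polynomial ℝ :=
  (1 - Polynomial.C ((q ^ (2 * (N - 2)))⁻¹ * qint (q ^ 4) N / qint (q ^ 2) N) * Polynomial.X) *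
    ∏ l ∈ Finset.range (N - 2), (1 - Polynomial.C ((q ^ (2 * l))⁻¹) * Polynomial.X)

open Polynomial in
lemma lin_coprime_aux {a b : ℝ} (h : a ≠ b) :
    IsCoprime (1 - C a * X) (1 - C b * X) := by
  have hba : b - a ≠ 0 := sub_ne_zero.mpr (Ne.symm h)
  have hab : a - b ≠ 0 := sub_ne_zero.mpr h
  refine ⟨C (b/(b-a)), C (a/(a-b)), ?_⟩
  have e1 : b/(b-a) + a/(a-b) = 1 := by field_simp; ring
  have e2 : b/(b-a)*a + a/(a-b)*b = 0 := by field_simp; ring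
  trans (C (b/(b-a)+a/(a-b)) - C (b/(b-a)*a + a/(a-b)*b) * X)
  · simp only [Polynomial.C_add, Polynomial.C_mul]; ring
  · rw [e1, e2]; simp

theorem coefficient_polynomials_coprime
    (q : ℝ) (hq0 : 0 < q) (hq1 : q < 1) (N : ℕ) (hN : 2 ≤ N)
    :
    (∀ t : ℝ, (P₁ q N).eval t = 0 → (P₂ q N).eval t ≠ 0) ∧ IsCoprime (P₁ q N) (P₂ q N) := by
  have hq0' : (0:ℝ) ≤ q := hq0.le
  have hne : Finset.Nonempty (Finset.range N) := ⟨0, by simp; omega⟩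
  have hv : 0 < qint (q ^ 2) N := by
    apply Finset.sum_pos (fun i _ => by positivity) hne
  have hu : 0 < qint (q ^ 4) N := by
    apply Finset.sum_pos (fun i _ => by positivity) hne
  -- a < 1 :  q^4 * qint(q^4) N < qint(q^2) N
  have h2 : q ^ 4 * qint (q ^ 4) N / qint (q ^ 2) N < 1 := by
    rw [div_lt_one hv]
    unfold qint
    rw [Finset.mul_sum]
    apply Finset.sum_lt_sum_of_nonempty hne
    intro i _
    calc q ^ 4 * (q ^ 4) ^ i = q ^ (4 + 4 * i) := by rw [pow_add, pow_mul]
    _ < q ^ (2 * i) := pow_lt_pow_right_of_lt_one₀ hq0 hq1 (by omega)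
    _ = (q ^ 2) ^ i := by rw [pow_mul]
  -- core for b : q^(2N+2) * qint(q^2) N < qint(q^4) N
  have hcore : q ^ (2 * N + 2) * qint (q ^ 2) N < qint (q ^ 4) N := by
    unfold qint
    rw [Finset.mul_sum]
    apply Finset.sum_lt_sum_of_nonempty hne
    intro i hi
    simp only [Finset.mem_range] at hi
    calc q ^ (2 * N + 2) * (q ^ 2) ^ i = q ^ (2 * N + 2 + 2 * i) := by
          rw [pow_add q (2 * N + 2) (2 * i), pow_mul]
    _ < q ^ (4 * i) := pow_lt_pow_right_of_lt_one₀ hq0 hq1 (by omega)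
    _ = (q ^ 4) ^ i := by rw [pow_mul]
  have hpe : 0 < q ^ (2 * (N - 2)) := by positivity
  -- q^6 < b
  have h3 : q ^ 6 < (q ^ (2 * (N - 2)))⁻¹ * qint (q ^ 4) N / qint (q ^ 2) N := by
    rw [lt_div_iff₀ hv, inv_mul_eq_div, lt_div_iff₀ hpe]
    calc q ^ 6 * qint (q ^ 2) N * q ^ (2 * (N - 2))
        = q ^ (6 + 2 * (N - 2)) * qint (q ^ 2) N := by ring
      _ = q ^ (2 * N + 2) * qint (q ^ 2) N := by rw [show 6 + 2 * (N - 2) = 2 * N + 2 by omega]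
      _ < qint (q ^ 4) N := hcore
  -- a < b
  have hq4 : q ^ 4 < (q ^ (2 * (N - 2)))⁻¹ := by
    have hlt : q ^ 4 * q ^ (2 * (N - 2)) < 1 := by
      rw [← pow_add]; exact pow_lt_one₀ hq0' hq1 (by omega)
    calc q ^ 4 = q ^ 4 * q ^ (2 * (N - 2)) * (q ^ (2 * (N - 2)))⁻¹ := by field_simp
      _ < 1 * (q ^ (2 * (N - 2)))⁻¹ := mul_lt_mul_of_pos_right hlt (by positivity)
      _ = (q ^ (2 * (N - 2)))⁻¹ := one_mul _
  have h1 : q ^ 4 * qint (q ^ 4) N / qint (q ^ 2) N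
      < (q ^ (2 * (N - 2)))⁻¹ * qint (q ^ 4) N / qint (q ^ 2) N :=
    div_lt_div_of_pos_right (mul_lt_mul_of_pos_right hq4 hu) hv
  have h4 : ∀ l : ℕ, (1:ℝ) ≤ (q ^ (2 * l))⁻¹ := by
    intro l
    rw [one_le_inv_iff₀]
    exact ⟨by positivity, pow_le_one₀ hq0' hq1.le⟩
  have h5 : ∀ l : ℕ, q ^ (2 * (l + 3)) < 1 :=
    fun l => pow_lt_one₀ hq0' hq1 (by omega)
  have h6 : ∀ l : ℕ, q ^ (2 * (l + 3)) ≤ q ^ 6 :=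
    fun l => pow_le_pow_of_le_one hq0' hq1.le (by omega)
  have hcop : IsCoprime (P₁ q N) (P₂ q N) := by
    unfold P₁ P₂
    apply IsCoprime.mul_left
    · apply IsCoprime.mul_right
      · exact lin_coprime_aux (ne_of_lt h1)
      · apply IsCoprime.prod_right
        intro l _
        exact lin_coprime_aux (ne_of_lt (lt_of_lt_of_le h2 (h4 l)))
    · apply IsCoprime.prod_left
      intro l _
      apply IsCoprime.mul_right
      · exact lin_coprime_aux (ne_of_lt (lt_of_le_of_lt (h6 l) h3))
      · apply IsCoprime.prod_right
        intro l' _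
        exact lin_coprime_aux (ne_of_lt (lt_of_lt_of_le (h5 l) (h4 l')))
  refine ⟨?_, hcop⟩
  intro t ht1 ht2
  obtain ⟨a, b, hab⟩ := hcop
  have := congrArg (Polynomial.eval t) hab
  simp [ht1, ht2] at this
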